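/- Let b_1,...,b_n be positive reals each at most e^{-2}, and define s_i = ln(K)/ln(b_i) for K ∈ (0,1) with Σ_j b_j = n K^n and K ≤ (n e^2)^{-1/n}. Then Σ_{j=1}^n s_j ≤ 1. (Jensen step in Lemma on plank scalars for finite-dimensional case.) -/

import Mathlib

open Real

lemma exp_quad_aux (u : ℝ) (hu : 0 ≤ u) : 1 + u + u ^ 2 / 2 ≤ Real.exp u := by
  have hmono : Monotone (fun u : ℝ => Real.exp u - (1 + u + u ^ 2 / 2)) := by
    apply monotone_of_deriv_nonneg
    · fun_prop
    · intro x
      have hd : HasDerivAt (fun u : ℝ => Real.exp u - (1 + u + u ^ 2 / 2))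
          (Real.exp x - (0 + 1 + 2 * x ^ 1 / 2)) x :=
        (Real.hasDerivAt_exp x).sub
          (((hasDerivAt_const x (1:ℝ)).add (hasDerivAt_id x)).add
            ((hasDerivAt_pow 2 x).div_const 2))
      rw [hd.deriv]
      have := Real.add_one_le_exp x
      simp only [pow_one]
      linarith
  have h := hmono hu
  simp only [Real.exp_zero] at h
  norm_num at h
  linarith

lemma lemB_aux (u : ℝ) (hu : u ≤ 0) : 2 * u ≤ (2 - u) * (Real.exp u - 1) := by
  have hanti : Antitone (fun u : ℝ => (2 - u) * (Real.exp u - 1) - 2 * u) := by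
    apply antitone_of_deriv_nonpos
    · fun_prop
    · intro x
      have hd : HasDerivAt (fun u : ℝ => (2 - u) * (Real.exp u - 1) - 2 * u)
          ((0 - 1) * (Real.exp x - 1) + (2 - x) * Real.exp x - 2 * 1) x := by
        exact ((((hasDerivAt_const x (2:ℝ)).sub (hasDerivAt_id x)).mul
          ((Real.hasDerivAt_exp x).sub (hasDerivAt_const x 1))).sub
          ((hasDerivAt_id x).const_mul 2)).congr_deriv (by simp)
      rw [hd.deriv]
      have h1 := Real.add_one_le_exp (-x)
      have h2 : Real.exp x * (1 - x) ≤ Real.exp x * Real.exp (-x) :=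
        mul_le_mul_of_nonneg_left (by linarith) (Real.exp_pos x).le
      rw [← Real.exp_add] at h2
      simp only [add_neg_cancel, Real.exp_zero] at h2
      nlinarith [Real.exp_pos x]
  have h := hanti hu
  simp only [Real.exp_zero] at h
  norm_num at h
  linarith

lemma core_aux (a u : ℝ) (ha : 2 ≤ a) (hu : u ≤ a - 2) :
    a * u ≤ (a - u) * (Real.exp u - 1) := by
  rcases le_or_gt 0 u with h0 | h0
  · have hq := exp_quad_aux u h0
    nlinarith [sq_nonneg u]
  · have hB := lemB_aux u h0.le
    have hau : (0:ℝ) ≤ a - u := by linarith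
    nlinarith [mul_le_mul_of_nonneg_left hB hau, sq_nonneg u]

theorem sum_log_ratios_le_one (n : ℕ) (hn : 0 < n) (K : ℝ)
    (hK0 : 0 < K) (hK1 : K < 1)
    (hK : K ≤ 1 / ((n * Real.exp 1 ^ 2) ^ ((1 : ℝ) / n)))
    (b : Fin n → ℝ) (hb : ∀ i, 0 < b i)
    (hble : ∀ i, b i ≤ Real.exp (-2))
    (hsum : ∑ i, b i = n * K ^ n) :
    ∑ i, Real.log K / Real.log (b i) ≤ 1 := by
  have hn1 : (1:ℝ) ≤ n := by exact_mod_cast hn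
  have hnpos : (0:ℝ) < n := by linarith
  set L : ℝ := -Real.log K with hL
  have hLpos : 0 < L := by
    have := Real.log_neg hK0 hK1
    rw [hL]; linarith
  set m : ℝ := K ^ n with hm
  have hmpos : 0 < m := pow_pos hK0 n
  have hne2 : (0:ℝ) < (n:ℝ) * Real.exp 1 ^ 2 := by positivity
  have hKn : m ≤ 1 / ((n:ℝ) * Real.exp 1 ^ 2) := by
    have hpow := pow_le_pow_left₀ hK0.le hK n
    calc m ≤ (1 / (((n:ℝ) * Real.exp 1 ^ 2) ^ ((1:ℝ)/n))) ^ n := hpow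
      _ = 1 / ((n:ℝ) * Real.exp 1 ^ 2) := by
          rw [div_pow, one_pow, ← Real.rpow_natCast (((n:ℝ) * Real.exp 1 ^ 2) ^ ((1:ℝ)/n)) n,
            ← Real.rpow_mul hne2.le,
            show (1:ℝ)/(n:ℝ) * n = 1 from by field_simp, Real.rpow_one]
  have hlogm : Real.log m = -((n:ℝ) * L) := by
    rw [hm, Real.log_pow, hL]; ring
  have ha2 : 2 ≤ (n:ℝ) * L := by
    have h1 : m ≤ Real.exp (-2) := by
      calc m ≤ 1 / ((n:ℝ) * Real.exp 1 ^ 2) := hKn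
        _ ≤ 1 / (Real.exp 1 ^ 2) := by
            apply one_div_le_one_div_of_le (by positivity)
            nlinarith [Real.exp_pos 1]
        _ = Real.exp (-2) := by
            rw [Real.exp_neg, ← Real.exp_nat_mul]
            norm_num
    have h2 := Real.log_le_log hmpos h1
    rw [hlogm, Real.log_exp] at h2
    linarith
  have hapos : (0:ℝ) < (n:ℝ) * L := by linarith
  have hdpos : (0:ℝ) < (n:ℝ)^2 * L * m := by positivity
  have key : ∀ i, Real.log K / Real.log (b i) ≤
      ((n:ℝ) * L * m + b i - m) / ((n:ℝ)^2 * L * m) := by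
    intro i
    have hbi := hb i
    have hti : Real.log (b i) ≤ -2 := by
      have := Real.log_le_log hbi (hble i)
      rwa [Real.log_exp] at this
    set t : ℝ := -Real.log (b i) with ht
    have htpos : (0:ℝ) < t := by rw [ht]; linarith
    have hcore := core_aux ((n:ℝ)*L) ((n:ℝ)*L - t) ha2 (by rw [ht]; linarith)
    have hexp : Real.exp ((n:ℝ)*L - t) = b i / m := by
      have h1 : (n:ℝ)*L - t = Real.log (b i) - Real.log m := by
        rw [hlogm, ht]; ring
      rw [h1, Real.exp_sub, Real.exp_log hbi, Real.exp_log hmpos]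
    rw [hexp] at hcore
    have hlogK : Real.log K = -L := by rw [hL]; ring
    have hlogb : Real.log (b i) = -t := by rw [ht]; ring
    rw [hlogK, hlogb, neg_div_neg_eq, div_le_div_iff₀ htpos hdpos]
    have hexpand : ((n:ℝ)*L - ((n:ℝ)*L - t)) * (b i / m - 1) * m
        = t * b i - t * m := by
      field_simp
      ring
    have hc2 := mul_le_mul_of_nonneg_right hcore hmpos.le
    rw [hexpand] at hc2
    nlinarith [hc2]
  calc ∑ i, Real.log K / Real.log (b i)
      ≤ ∑ i, ((n:ℝ) * L * m + b i - m) / ((n:ℝ)^2 * L * m) :=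
        Finset.sum_le_sum (fun i _ => key i)
    _ = (∑ i, ((n:ℝ) * L * m + b i - m)) / ((n:ℝ)^2 * L * m) := by
        rw [Finset.sum_div]
    _ = 1 := by
        have hs : ∑ i : Fin n, ((n:ℝ)*L*m + b i - m) = (n:ℝ)^2 * L * m := by
          have h1 : ∑ i : Fin n, ((n:ℝ)*L*m + b i - m)
              = (n:ℝ) * ((n:ℝ)*L*m) + (∑ i, b i) - (n:ℝ)*m := by
            rw [Finset.sum_sub_distrib, Finset.sum_add_distrib]
            simp [Finset.card_fin, mul_comm]
          rw [h1, hsum]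
          ring
        rw [hs, div_self hdpos.ne']
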